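/- Let d ≥ 2 be an integer, n : ℕ, and 0 ≤ k ≤ n. Then the n-copy partial transpose of A_k satisfies (A_k)^Γ = 2^{−n} • Σ_{l=0}^{n} Q l k • T_l, where the real coefficients Q l k are regarded as complex scalars. -/

import Mathlib

open Matrix Finset
open scoped BigOperators Kronecker ComplexOrder

noncomputable section

/-- The flip (swap) operator on `ℂ^d ⊗ ℂ^d`. -/
def Flip (d : ℕ) : Matrix (Fin d × Fin d) (Fin d × Fin d) ℂ :=
  Matrix.of fun p q => if p.1 = q.2 ∧ p.2 = q.1 then 1 else 0

/-- Projection onto the symmetric subspace, `Π_s = (1 + F)/2`. -/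
def projSym (d : ℕ) : Matrix (Fin d × Fin d) (Fin d × Fin d) ℂ :=
  (2 : ℂ)⁻¹ • (1 + Flip d)

/-- Projection onto the antisymmetric subspace, `Π_a = (1 - F)/2`. -/
def projAsym (d : ℕ) : Matrix (Fin d × Fin d) (Fin d × Fin d) ℂ :=
  (2 : ℂ)⁻¹ • (1 - Flip d)

/-- The symmetric Werner state `σ_d = (2/(d(d+1))) • Π_s`. -/
def wernerSym (d : ℕ) : Matrix (Fin d × Fin d) (Fin d × Fin d) ℂ :=
  (2 / ((d : ℂ) * ((d : ℂ) + 1))) • projSym d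

/-- The antisymmetric Werner state `α_d = (2/(d(d-1))) • Π_a`. -/
def wernerAsym (d : ℕ) : Matrix (Fin d × Fin d) (Fin d × Fin d) ℂ :=
  (2 / ((d : ℂ) * ((d : ℂ) - 1))) • projAsym d

/-- The POVM element `G_d`: diagonal, with `(i,j),(i,j)` entry `1` iff `i ≠ j`. -/
def Gmat (d : ℕ) : Matrix (Fin d × Fin d) (Fin d × Fin d) ℂ :=
  Matrix.diagonal fun p => if p.1 ≠ p.2 then 1 else 0

/-- `n`-fold tensor power of a matrix on `ℂ^d ⊗ ℂ^d`. -/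
def tpow {d : ℕ} (n : ℕ) (X : Matrix (Fin d × Fin d) (Fin d × Fin d) ℂ) :
    Matrix (Fin n → Fin d × Fin d) (Fin n → Fin d × Fin d) ℂ :=
  Matrix.of fun f g => ∏ m, X (f m) (g m)

/-- The twirled single-copy POVM element `M_d = ((d-1)/(d+1)) • Π_s + Π_a`. -/
def MdMat (d : ℕ) : Matrix (Fin d × Fin d) (Fin d × Fin d) ℂ :=
  (((d : ℂ) - 1) / ((d : ℂ) + 1)) • projSym d + projAsym d

/-- `A_k`: sum over all `k`-element subsets `S` of the copies of the tensor product with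
`Π_a` on copies in `S` and `Π_s` elsewhere. -/
def Amat (d n k : ℕ) : Matrix (Fin n → Fin d × Fin d) (Fin n → Fin d × Fin d) ℂ :=
  ∑ S ∈ Finset.powersetCard k (Finset.univ : Finset (Fin n)),
    Matrix.of fun f g => ∏ m, (if m ∈ S then projAsym d else projSym d) (f m) (g m)

/-- Partial transpose on `ℂ^d ⊗ ℂ^d`. -/
def pt {d : ℕ} (X : Matrix (Fin d × Fin d) (Fin d × Fin d) ℂ) :
    Matrix (Fin d × Fin d) (Fin d × Fin d) ℂ :=
  Matrix.of fun p q => X (p.1, q.2) (q.1, p.2)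

/-- The maximally entangled state `Φ_d`. -/
def Phi (d : ℕ) : Matrix (Fin d × Fin d) (Fin d × Fin d) ℂ :=
  Matrix.of fun p q => if p.1 = p.2 ∧ q.1 = q.2 then ((d : ℂ))⁻¹ else 0

/-- `n`-copy partial transpose. -/
def ptN {d n : ℕ} (Y : Matrix (Fin n → Fin d × Fin d) (Fin n → Fin d × Fin d) ℂ) :
    Matrix (Fin n → Fin d × Fin d) (Fin n → Fin d × Fin d) ℂ :=
  Matrix.of fun f g => Y (fun m => ((f m).1, (g m).2)) (fun m => ((g m).1, (f m).2))

/-- `T_l`: sum over all `l`-element subsets `S` of the copies of the tensor product with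
`Φ_d` on copies in `S` and `1 - Φ_d` elsewhere. -/
def Tmat (d n l : ℕ) : Matrix (Fin n → Fin d × Fin d) (Fin n → Fin d × Fin d) ℂ :=
  ∑ S ∈ Finset.powersetCard l (Finset.univ : Finset (Fin n)),
    Matrix.of fun f g => ∏ m, (if m ∈ S then Phi d else (1 - Phi d)) (f m) (g m)

/-- The matrix `Q` of the linear program: `Q l k = Σ_{j=0}^{min(l,k)}
(n−l choose k−j)(l choose j)(1−d)^j (1+d)^{l−j}`. -/
def Qmat (n : ℕ) (d : ℝ) (l k : ℕ) : ℝ :=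
  ∑ j ∈ Finset.range (min l k + 1),
    ((n - l).choose (k - j) : ℝ) * (l.choose j : ℝ) * (1 - d) ^ j * (1 + d) ^ (l - j)

/-- A PPT POVM element on the `n`-copy space: `E`, `1 - E`, `E^Γ`, `(1-E)^Γ` all PSD. -/
def IsPPTPovmElem {d n : ℕ}
    (E : Matrix (Fin n → Fin d × Fin d) (Fin n → Fin d × Fin d) ℂ) : Prop :=
  E.PosSemidef ∧ (1 - E).PosSemidef ∧ (ptN E).PosSemidef ∧ (ptN (1 - E)).PosSemidef

/-- Error probability for discriminating `σ_d^{⊗n}` (prior `p`) from `α_d^{⊗n}`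
(prior `1-p`) with the two-outcome POVM `{E, 1 - E}`. -/
def errProb (d n : ℕ) (p : ℝ)
    (E : Matrix (Fin n → Fin d × Fin d) (Fin n → Fin d × Fin d) ℂ) : ℝ :=
  ((p : ℂ) * (E * tpow n (wernerSym d)).trace
    + (1 - (p : ℂ)) * ((1 - E) * tpow n (wernerAsym d)).trace).re

/-- Separability of a bipartite matrix. -/
def IsSep {I J : Type*} [Fintype I] [Fintype J]
    (W : Matrix (I × J) (I × J) ℂ) : Prop :=
  ∃ (m : ℕ) (A : Fin m → Matrix I I ℂ) (B : Fin m → Matrix J J ℂ),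
    (∀ i, (A i).PosSemidef) ∧ (∀ i, (B i).PosSemidef) ∧ W = ∑ i, A i ⊗ₖ B i

/-- Square root of a positive semidefinite matrix (as defined in the older Mathlib). -/
def Matrix.PosSemidef.sqrt {n 𝕜 : Type*} [Fintype n] [RCLike 𝕜] [DecidableEq n]
    {A : Matrix n n 𝕜} (hA : A.PosSemidef) : Matrix n n 𝕜 :=
  hA.1.eigenvectorUnitary.1 * diagonal ((↑) ∘ Real.sqrt ∘ hA.1.eigenvalues) *
  (star hA.1.eigenvectorUnitary : Matrix n n 𝕜)

/-- Trace norm `‖X‖₁ = Tr √(Xᴴ X)`. -/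
def traceNorm {ι : Type*} [Fintype ι] [DecidableEq ι] (X : Matrix ι ι ℂ) : ℝ :=
  ((Matrix.posSemidef_conjTranspose_mul_self X).sqrt).trace.re

/-- Frobenius (Hilbert–Schmidt) norm `‖X‖₂ = √(Tr (Xᴴ X))`. -/
def frobNorm {ι : Type*} [Fintype ι] (X : Matrix ι ι ℂ) : ℝ :=
  Real.sqrt ((Xᴴ * X).trace.re)

-- counting lemma
lemma key_count (n k : ℕ) (T : Finset (Fin n)) (x y : ℂ) :
    ∑ S ∈ powersetCard k (univ : Finset (Fin n)), x ^ (T ∩ S).card * y ^ (T \ S).card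
    = ∑ j ∈ range (min T.card k + 1),
        ((n - T.card).choose (k - j) : ℂ) * (T.card.choose j : ℂ) * x ^ j * y ^ (T.card - j) := by
  have hTn : T.card ≤ n := by simpa using T.card_le_univ
  have hcompl : Tᶜ.card = n - T.card := by simp [Finset.card_compl]
  -- rewrite (T \ S).card
  have hstep0 : ∀ S : Finset (Fin n), (T \ S).card = T.card - (T ∩ S).card := by
    intro S
    have := Finset.card_inter_add_card_sdiff T S
    omega
  calc
    ∑ S ∈ powersetCard k (univ : Finset (Fin n)), x ^ (T ∩ S).card * y ^ (T \ S).card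
        = ∑ q ∈ (T.powerset ×ˢ Tᶜ.powerset).filter (fun q => q.1.card + q.2.card = k),
            x ^ q.1.card * y ^ (T.card - q.1.card) := by
      refine Finset.sum_nbij' (fun S => (T ∩ S, S \ T)) (fun q => q.1 ∪ q.2) ?_ ?_ ?_ ?_ ?_
      · intro S hS
        rw [Finset.mem_powersetCard] at hS
        simp only [Finset.mem_filter, Finset.mem_product, Finset.mem_powerset]
        refine ⟨⟨Finset.inter_subset_left, ?_⟩, ?_⟩
        · intro a ha; simp only [Finset.mem_sdiff] at ha; simp [ha.2]
        · rw [Finset.inter_comm]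
          have := Finset.card_inter_add_card_sdiff S T
          omega
      · intro q hq
        simp only [Finset.mem_filter, Finset.mem_product, Finset.mem_powerset] at hq
        rw [Finset.mem_powersetCard]
        refine ⟨Finset.subset_univ _, ?_⟩
        rw [Finset.card_union_of_disjoint, hq.2]
        exact Finset.disjoint_left.2 fun a ha hb =>
          (Finset.mem_compl.1 (hq.1.2 hb)) (hq.1.1 ha)
      · intro S hS
        show (T ∩ S) ∪ (S \ T) = S
        ext a
        simp only [Finset.mem_union, Finset.mem_inter, Finset.mem_sdiff]
        tauto
      · intro q hq
        simp only [Finset.mem_filter, Finset.mem_product, Finset.mem_powerset] at hq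
        obtain ⟨⟨h1, h2⟩, _⟩ := hq
        have hd : Disjoint T q.2 := Finset.disjoint_left.2 fun a ha hb =>
          (Finset.mem_compl.1 (h2 hb)) ha
        ext1
        · simp only
          rw [Finset.inter_union_distrib_left, Finset.inter_eq_right.2 h1,
            Finset.disjoint_iff_inter_eq_empty.1 hd, Finset.union_empty]
        · simp only
          rw [Finset.union_sdiff_distrib, Finset.sdiff_eq_empty_iff_subset.2 h1,
            Finset.empty_union, Finset.sdiff_eq_self_of_disjoint hd.symm]
      · intro S hS
        rw [hstep0 S]
    _ = ∑ A ∈ T.powerset, ∑ B ∈ Tᶜ.powerset,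
          if A.card + B.card = k then x ^ A.card * y ^ (T.card - A.card) else 0 := by
      rw [Finset.sum_filter, Finset.sum_product]
    _ = ∑ A ∈ T.powerset,
          (if A.card ≤ k then ((n - T.card).choose (k - A.card) : ℂ) else 0)
            * (x ^ A.card * y ^ (T.card - A.card)) := by
      refine Finset.sum_congr rfl fun A hA => ?_
      by_cases h : A.card ≤ k
      · rw [if_pos h]
        have hfe : Tᶜ.powerset.filter (fun B => A.card + B.card = k)
            = powersetCard (k - A.card) Tᶜ := by
          rw [Finset.powersetCard_eq_filter]
          refine Finset.filter_congr fun B hB => ?_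
          constructor <;> intro hh <;> omega
        rw [← Finset.sum_filter, hfe, Finset.sum_const, Finset.card_powersetCard, hcompl,
          nsmul_eq_mul]
      · rw [if_neg h]
        rw [← Finset.sum_filter]
        have : Tᶜ.powerset.filter (fun B => A.card + B.card = k) = ∅ := by
          refine Finset.filter_false_of_mem fun B hB => ?_
          omega
        simp [this]
    _ = ∑ j ∈ range (T.card + 1), ∑ A ∈ powersetCard j T,
          (if j ≤ k then ((n - T.card).choose (k - j) : ℂ) else 0)
            * (x ^ j * y ^ (T.card - j)) := by
      rw [Finset.sum_powerset]
      refine Finset.sum_congr rfl fun j hj => Finset.sum_congr rfl fun A hA => ?_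
      rw [(Finset.mem_powersetCard.1 hA).2]
    _ = ∑ j ∈ range (T.card + 1),
          (T.card.choose j : ℂ) * ((if j ≤ k then ((n - T.card).choose (k - j) : ℂ) else 0)
            * (x ^ j * y ^ (T.card - j))) := by
      refine Finset.sum_congr rfl fun j hj => ?_
      rw [Finset.sum_const, Finset.card_powersetCard, nsmul_eq_mul]
    _ = ∑ j ∈ range (min T.card k + 1),
          (T.card.choose j : ℂ) * ((if j ≤ k then ((n - T.card).choose (k - j) : ℂ) else 0)
            * (x ^ j * y ^ (T.card - j))) := by
      refine (Finset.sum_subset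
        (Finset.range_subset_range.2 (Nat.succ_le_succ (Nat.min_le_left _ _))) ?_).symm
      intro j hj hj2
      rw [Finset.mem_range] at hj; rw [Finset.mem_range] at hj2
      rw [if_neg (by omega)]
      simp
    _ = ∑ j ∈ range (min T.card k + 1),
        ((n - T.card).choose (k - j) : ℂ) * (T.card.choose j : ℂ) * x ^ j * y ^ (T.card - j) := by
      refine Finset.sum_congr rfl fun j hj => ?_
      rw [Finset.mem_range] at hj
      rw [if_pos (by omega)]; ring

lemma ite_matrix_apply {I : Type*} (P : Prop) [Decidable P]
    (X Y : Matrix I I ℂ) (p q : I) :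
    (if P then X else Y) p q = if P then X p q else Y p q := by
  split <;> rfl

lemma one_pt {d : ℕ} (p q : Fin d × Fin d) :
    (1 : Matrix (Fin d × Fin d) (Fin d × Fin d) ℂ) (p.1, q.2) (q.1, p.2)
      = (1 : Matrix (Fin d × Fin d) (Fin d × Fin d) ℂ) p q := by
  rcases p with ⟨p1, p2⟩; rcases q with ⟨q1, q2⟩
  simp only [Matrix.one_apply, Prod.mk.injEq, Prod.ext_iff]
  by_cases h1 : p1 = q1 <;> by_cases h2 : p2 = q2 <;> simp [h1, h2, eq_comm]

lemma flip_pt {d : ℕ} (hd : (d : ℂ) ≠ 0) (p q : Fin d × Fin d) :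
    Flip d (p.1, q.2) (q.1, p.2) = (d : ℂ) * Phi d p q := by
  rcases p with ⟨p1, p2⟩; rcases q with ⟨q1, q2⟩
  simp only [Flip, Phi, Matrix.of_apply]
  by_cases h1 : p1 = p2 <;> by_cases h2 : q1 = q2 <;>
    simp [h1, h2, eq_comm, mul_inv_cancel₀ hd]

lemma pt_projSym {d : ℕ} (hd : (d : ℂ) ≠ 0) (p q : Fin d × Fin d) :
    projSym d (p.1, q.2) (q.1, p.2)
      = 2⁻¹ * ((1 + (d : ℂ)) * Phi d p q + (1 - Phi d) p q) := by
  simp only [projSym, Matrix.smul_apply, Matrix.add_apply, Matrix.sub_apply, smul_eq_mul,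
    one_pt, flip_pt hd]
  ring

lemma pt_projAsym {d : ℕ} (hd : (d : ℂ) ≠ 0) (p q : Fin d × Fin d) :
    projAsym d (p.1, q.2) (q.1, p.2)
      = 2⁻¹ * ((1 - (d : ℂ)) * Phi d p q + (1 - Phi d) p q) := by
  simp only [projAsym, Matrix.smul_apply, Matrix.add_apply, Matrix.sub_apply, smul_eq_mul,
    one_pt, flip_pt hd]
  ring

/-- `(A_k)^Γ = 2^{−n} • Σ_{l=0}^{n} Q l k • T_l`. -/
theorem ptN_Amat (d : ℕ) (hd : 2 ≤ d) (n k : ℕ) (hk : k ≤ n) :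
    ptN (Amat d n k)
      = ((2 : ℂ) ^ n)⁻¹ •
          ∑ l ∈ Finset.range (n + 1), ((Qmat n (d : ℝ) l k : ℝ) : ℂ) • Tmat d n l := by
  have hd0 : ((d : ℕ) : ℂ) ≠ 0 := Nat.cast_ne_zero.2 (by omega)
  ext f g
  set A : Fin n → ℂ := fun m => (1 - Phi d) (f m) (g m) with hA
  set B : Fin n → ℂ := fun m => Phi d (f m) (g m) with hB
  set x : ℂ := 1 - (d : ℂ) with hx
  set y : ℂ := 1 + (d : ℂ) with hy
  -- LHS
  have lhs_eq : ptN (Amat d n k) f g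
      = ((2 : ℂ)⁻¹) ^ n * ∑ T ∈ (univ : Finset (Fin n)).powerset,
          (∑ S ∈ powersetCard k (univ : Finset (Fin n)),
              x ^ (T ∩ S).card * y ^ (T \ S).card) *
            ((∏ m ∈ T, B m) * ∏ m ∈ univ \ T, A m) := by
    simp only [ptN, Amat, Matrix.of_apply, Matrix.sum_apply]
    have step1 : ∀ S ∈ powersetCard k (univ : Finset (Fin n)),
        (∏ m, (if m ∈ S then projAsym d else projSym d)
            ((f m).1, (g m).2) ((g m).1, (f m).2))
        = ((2 : ℂ)⁻¹) ^ n * ∑ T ∈ (univ : Finset (Fin n)).powerset,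
            ((∏ m ∈ T, (if m ∈ S then x else y)) * ∏ m ∈ T, B m) * ∏ m ∈ univ \ T, A m := by
      intro S _
      have hfac : ∀ m : Fin n,
          (if m ∈ S then projAsym d else projSym d) ((f m).1, (g m).2) ((g m).1, (f m).2)
          = 2⁻¹ * ((if m ∈ S then x else y) * B m + A m) := by
        intro m
        rw [ite_matrix_apply]
        by_cases hm : m ∈ S
        · simp [hm, pt_projAsym hd0 (f m) (g m), hB, hA, hx]
        · simp [hm, pt_projSym hd0 (f m) (g m), hB, hA, hy]
      calc
        (∏ m, (if m ∈ S then projAsym d else projSym d)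
            ((f m).1, (g m).2) ((g m).1, (f m).2))
            = ∏ m, (2 : ℂ)⁻¹ * ((if m ∈ S then x else y) * B m + A m) :=
          Finset.prod_congr rfl fun m _ => hfac m
        _ = ((2 : ℂ)⁻¹) ^ n * ∏ m, ((if m ∈ S then x else y) * B m + A m) := by
          rw [Finset.prod_mul_distrib, Finset.prod_const, Finset.card_univ, Fintype.card_fin]
        _ = ((2 : ℂ)⁻¹) ^ n * ∑ T ∈ (univ : Finset (Fin n)).powerset,
            ((∏ m ∈ T, (if m ∈ S then x else y)) * ∏ m ∈ T, B m) * ∏ m ∈ univ \ T, A m := by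
          rw [Finset.prod_add]
          congr 1
          refine Finset.sum_congr rfl fun T _ => ?_
          rw [Finset.prod_mul_distrib]
    rw [Finset.sum_congr rfl step1, ← Finset.mul_sum, Finset.sum_comm]
    congr 1
    refine Finset.sum_congr rfl fun T _ => ?_
    rw [Finset.sum_mul]
    refine Finset.sum_congr rfl fun S _ => ?_
    have : (∏ m ∈ T, (if m ∈ S then x else y)) = x ^ (T ∩ S).card * y ^ (T \ S).card := by
      rw [Finset.prod_ite, Finset.prod_const, Finset.prod_const,
        Finset.filter_mem_eq_inter, ← Finset.sdiff_eq_filter]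
    rw [this]; ring
  -- RHS
  have Mvals : ∀ T : Finset (Fin n),
      (∏ m, (if m ∈ T then Phi d else (1 - Phi d)) (f m) (g m))
      = (∏ m ∈ T, B m) * ∏ m ∈ univ \ T, A m := by
    intro T
    calc (∏ m, (if m ∈ T then Phi d else (1 - Phi d)) (f m) (g m))
        = ∏ m, (if m ∈ T then B m else A m) :=
          Finset.prod_congr rfl fun m _ => by rw [ite_matrix_apply]
      _ = (∏ m ∈ T, B m) * ∏ m ∈ univ \ T, A m := by
          rw [Finset.prod_ite, Finset.filter_mem_eq_inter, Finset.univ_inter,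
            ← Finset.sdiff_eq_filter]
  have rhs_eq : (((2 : ℂ) ^ n)⁻¹ •
        ∑ l ∈ Finset.range (n + 1), ((Qmat n (d : ℝ) l k : ℝ) : ℂ) • Tmat d n l) f g
      = ((2 : ℂ)⁻¹) ^ n * ∑ T ∈ (univ : Finset (Fin n)).powerset,
          (((Qmat n (d : ℝ) T.card k : ℝ) : ℂ)) *
            ((∏ m ∈ T, B m) * ∏ m ∈ univ \ T, A m) := by
    simp only [Matrix.smul_apply, Matrix.sum_apply, Tmat, Matrix.of_apply, smul_eq_mul]
    rw [← inv_pow]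
    congr 1
    rw [Finset.sum_powerset]
    simp only [Finset.card_univ, Fintype.card_fin]
    refine Finset.sum_congr rfl fun l hl => ?_
    rw [Finset.mul_sum]
    refine Finset.sum_congr rfl fun T hT => ?_
    rw [Mvals T, (Finset.mem_powersetCard.1 hT).2]
  rw [lhs_eq, rhs_eq]
  congr 1
  refine Finset.sum_congr rfl fun T _ => ?_
  congr 1
  rw [key_count n k T x y]
  rw [show ((Qmat n (d : ℝ) T.card k : ℝ) : ℂ)
      = ∑ j ∈ range (min T.card k + 1),
        ((n - T.card).choose (k - j) : ℂ) * (T.card.choose j : ℂ) * x ^ j * y ^ (T.card - j)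
    from by push_cast [Qmat, hx, hy]; ring_nf]


end
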